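/- Let $n\ge 2$ and let $x,y,z\in\mathbb{R}^n$ be pairwise distinct, and set $E_{xyyz}=\frac{x-y}{|x-y|}-\frac{y-z}{|y-z|}$. Then for all multi-index derivatives of first order in $y$: each first-order partial derivative $\partial_{y_i}|E_{xyyz}|^{-1}$ satisfies $\big|\nabla_y |E_{xyyz}|^{-1}\big| \le C\, |E_{xyyz}|^{-2}\big(|x-y|^{-1}+|y-z|^{-1}\big)$ on the set where $E_{xyyz}\ne 0$, for an absolute constant $C$ depending only on $n$. -/

import Mathlib

open ContinuousLinearMap
set_option maxHeartbeats 1000000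

lemma aux_invnorm {F : Type*} [NormedAddCommGroup F] [InnerProductSpace ℝ F]
    {w : F} (hw : w ≠ 0) :
    ∃ G : F →L[ℝ] ℝ, HasFDerivAt (fun v : F => ‖v‖⁻¹) G w ∧ ‖G‖ ≤ (‖w‖ ^ 2)⁻¹ := by
  have hdn : DifferentiableAt ℝ (fun v : F => ‖v‖) w := by
    simpa using (differentiableAt_id.norm ℝ (by simpa using hw))
  set N := fderiv ℝ (fun v : F => ‖v‖) w with hNdef
  have hN : HasFDerivAt (fun v : F => ‖v‖) N w := hdn.hasFDerivAt
  have hNle : ‖N‖ ≤ 1 := by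
    have := hN.le_of_lipschitz (lipschitzWith_one_norm (E := F))
    simpa using this
  have hwn : ‖w‖ ≠ 0 := norm_ne_zero_iff.mpr hw
  have hinv : HasDerivAt Inv.inv (-(‖w‖ ^ 2)⁻¹) ‖w‖ := hasDerivAt_inv hwn
  have hG : HasFDerivAt (fun v : F => ‖v‖⁻¹) ((-(‖w‖ ^ 2)⁻¹ : ℝ) • N) w := by
    exact hinv.comp_hasFDerivAt w hN
  refine ⟨_, hG, ?_⟩
  calc ‖(-(‖w‖ ^ 2)⁻¹ : ℝ) • N‖ ≤ ‖(-(‖w‖ ^ 2)⁻¹ : ℝ)‖ * ‖N‖ := ContinuousLinearMap.opNorm_smul_le _ _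
    _ = (‖w‖ ^ 2)⁻¹ * ‖N‖ := by
        rw [Real.norm_eq_abs, abs_neg, abs_of_nonneg (by positivity)]
    _ ≤ (‖w‖ ^ 2)⁻¹ * 1 := mul_le_mul_of_nonneg_left hNle (by positivity)
    _ = (‖w‖ ^ 2)⁻¹ := by ring

lemma aux_unit {F : Type*} [NormedAddCommGroup F] [InnerProductSpace ℝ F]
    {w : F} (hw : w ≠ 0) :
    ∃ D : F →L[ℝ] F, HasFDerivAt (fun v : F => ‖v‖⁻¹ • v) D w ∧ ‖D‖ ≤ 2 * ‖w‖⁻¹ := by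
  obtain ⟨G, hG, hGle⟩ := aux_invnorm hw
  have hD : HasFDerivAt (fun v : F => ‖v‖⁻¹ • v)
      (‖w‖⁻¹ • ContinuousLinearMap.id ℝ F + G.smulRight w) w :=
    hG.smul (hasFDerivAt_id w)
  refine ⟨_, hD, ?_⟩
  have hwn : (0:ℝ) < ‖w‖ := norm_pos_iff.mpr hw
  have h1 : ‖‖w‖⁻¹ • ContinuousLinearMap.id ℝ F‖ ≤ ‖w‖⁻¹ := by
    calc ‖(‖w‖⁻¹ : ℝ) • ContinuousLinearMap.id ℝ F‖
        ≤ ‖(‖w‖⁻¹ : ℝ)‖ * ‖ContinuousLinearMap.id ℝ F‖ :=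
          ContinuousLinearMap.opNorm_smul_le _ _
      _ ≤ ‖w‖⁻¹ * 1 := by
          apply mul_le_mul (le_of_eq (by
            rw [Real.norm_eq_abs, abs_of_nonneg (le_of_lt (inv_pos.mpr hwn))]))
            (norm_id_le) (norm_nonneg _) (by positivity)
      _ = ‖w‖⁻¹ := by ring
  have h2 : ‖G.smulRight w‖ ≤ ‖w‖⁻¹ := by
    rw [ContinuousLinearMap.norm_smulRight_apply]
    calc ‖G‖ * ‖w‖ ≤ (‖w‖ ^ 2)⁻¹ * ‖w‖ := mul_le_mul_of_nonneg_right hGle (norm_nonneg _)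
      _ = ‖w‖⁻¹ := by field_simp
  calc ‖‖w‖⁻¹ • ContinuousLinearMap.id ℝ F + G.smulRight w‖
      ≤ ‖‖w‖⁻¹ • ContinuousLinearMap.id ℝ F‖ + ‖G.smulRight w‖ := norm_add_le _ _
    _ ≤ ‖w‖⁻¹ + ‖w‖⁻¹ := add_le_add h1 h2
    _ = 2 * ‖w‖⁻¹ := by ring

theorem stmt13 (n : ℕ) (hn : 2 ≤ n) :
    ∃ C > (0 : ℝ), ∀ x y z : EuclideanSpace ℝ (Fin n),
      x ≠ y → y ≠ z → x ≠ z →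
      ‖x - y‖⁻¹ • (x - y) - ‖y - z‖⁻¹ • (y - z) ≠ 0 →
      ‖gradient
          (fun y' : EuclideanSpace ℝ (Fin n) =>
            ‖‖x - y'‖⁻¹ • (x - y') - ‖y' - z‖⁻¹ • (y' - z)‖⁻¹) y‖ ≤
        C * (‖‖x - y‖⁻¹ • (x - y) - ‖y - z‖⁻¹ • (y - z)‖⁻¹) ^ 2 *
          (‖x - y‖⁻¹ + ‖y - z‖⁻¹) := by
  refine ⟨2, by norm_num, ?_⟩
  intro x y z hxy hyz hxz hE
  have hw₁ : x - y ≠ 0 := sub_ne_zero.mpr hxy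
  have hw₂ : y - z ≠ 0 := sub_ne_zero.mpr hyz
  obtain ⟨D₁, hD₁, hD₁n⟩ := aux_unit hw₁
  obtain ⟨D₂, hD₂, hD₂n⟩ := aux_unit hw₂
  have hi₁ : HasFDerivAt (fun y' : EuclideanSpace ℝ (Fin n) => x - y') (-(ContinuousLinearMap.id ℝ (EuclideanSpace ℝ (Fin n)))) y :=
    (hasFDerivAt_id y).const_sub x
  have hi₂ : HasFDerivAt (fun y' : EuclideanSpace ℝ (Fin n) => y' - z) (ContinuousLinearMap.id ℝ (EuclideanSpace ℝ (Fin n))) y :=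
    (hasFDerivAt_id y).sub_const z
  have h₁ : HasFDerivAt (fun y' : EuclideanSpace ℝ (Fin n) => ‖x - y'‖⁻¹ • (x - y'))
      (D₁.comp (-(ContinuousLinearMap.id ℝ (EuclideanSpace ℝ (Fin n))))) y := hD₁.comp y hi₁
  have h₂ : HasFDerivAt (fun y' : EuclideanSpace ℝ (Fin n) => ‖y' - z‖⁻¹ • (y' - z))
      (D₂.comp (ContinuousLinearMap.id ℝ (EuclideanSpace ℝ (Fin n)))) y := by
    have := hD₂.comp y hi₂
    exact this
  have hEd : HasFDerivAt (fun y' : EuclideanSpace ℝ (Fin n) => ‖x - y'‖⁻¹ • (x - y') - ‖y' - z‖⁻¹ • (y' - z))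
      (D₁.comp (-(ContinuousLinearMap.id ℝ (EuclideanSpace ℝ (Fin n)))) - D₂.comp (ContinuousLinearMap.id ℝ (EuclideanSpace ℝ (Fin n)))) y :=
    h₁.sub h₂
  obtain ⟨G, hG, hGn⟩ := aux_invnorm hE
  have hf : HasFDerivAt
      (fun y' : EuclideanSpace ℝ (Fin n) => ‖‖x - y'‖⁻¹ • (x - y') - ‖y' - z‖⁻¹ • (y' - z)‖⁻¹)
      (G.comp (D₁.comp (-(ContinuousLinearMap.id ℝ (EuclideanSpace ℝ (Fin n)))) - D₂.comp (ContinuousLinearMap.id ℝ (EuclideanSpace ℝ (Fin n)))))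
      y := by
    have := hG.comp y hEd
    exact this
  have hgrad := hf.hasGradientAt.gradient
  rw [hgrad]
  rw [LinearIsometryEquiv.norm_map]
  set e := ‖x - y‖⁻¹ • (x - y) - ‖y - z‖⁻¹ • (y - z) with he
  have hE'le : ‖D₁.comp (-(ContinuousLinearMap.id ℝ (EuclideanSpace ℝ (Fin n)))) - D₂.comp (ContinuousLinearMap.id ℝ (EuclideanSpace ℝ (Fin n)))‖
      ≤ 2 * ‖x - y‖⁻¹ + 2 * ‖y - z‖⁻¹ := by
    have b1 : ‖D₁.comp (-(ContinuousLinearMap.id ℝ (EuclideanSpace ℝ (Fin n))))‖ ≤ 2 * ‖x - y‖⁻¹ := by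
      calc ‖D₁.comp (-(ContinuousLinearMap.id ℝ (EuclideanSpace ℝ (Fin n))))‖ ≤ ‖D₁‖ * ‖-(ContinuousLinearMap.id ℝ (EuclideanSpace ℝ (Fin n)))‖ :=
            ContinuousLinearMap.opNorm_comp_le _ _
        _ ≤ ‖D₁‖ * 1 := mul_le_mul_of_nonneg_left (by rw [norm_neg]; exact norm_id_le)
            (norm_nonneg _)
        _ = ‖D₁‖ := by ring
        _ ≤ 2 * ‖x - y‖⁻¹ := hD₁n
    have b2 : ‖D₂.comp (ContinuousLinearMap.id ℝ (EuclideanSpace ℝ (Fin n)))‖ ≤ 2 * ‖y - z‖⁻¹ := by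
      calc ‖D₂.comp (ContinuousLinearMap.id ℝ (EuclideanSpace ℝ (Fin n)))‖ ≤ ‖D₂‖ * ‖(ContinuousLinearMap.id ℝ (EuclideanSpace ℝ (Fin n)))‖ :=
            ContinuousLinearMap.opNorm_comp_le _ _
        _ ≤ ‖D₂‖ * 1 := mul_le_mul_of_nonneg_left norm_id_le (norm_nonneg _)
        _ = ‖D₂‖ := by ring
        _ ≤ 2 * ‖y - z‖⁻¹ := hD₂n
    calc ‖D₁.comp (-(ContinuousLinearMap.id ℝ (EuclideanSpace ℝ (Fin n)))) - D₂.comp (ContinuousLinearMap.id ℝ (EuclideanSpace ℝ (Fin n)))‖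
        ≤ ‖D₁.comp (-(ContinuousLinearMap.id ℝ (EuclideanSpace ℝ (Fin n))))‖ + ‖D₂.comp (ContinuousLinearMap.id ℝ (EuclideanSpace ℝ (Fin n)))‖ :=
          norm_sub_le _ _
      _ ≤ 2 * ‖x - y‖⁻¹ + 2 * ‖y - z‖⁻¹ := add_le_add b1 b2
  calc ‖G.comp (D₁.comp (-(ContinuousLinearMap.id ℝ (EuclideanSpace ℝ (Fin n)))) - D₂.comp (ContinuousLinearMap.id ℝ (EuclideanSpace ℝ (Fin n))))‖
      ≤ ‖G‖ * ‖D₁.comp (-(ContinuousLinearMap.id ℝ (EuclideanSpace ℝ (Fin n)))) - D₂.comp (ContinuousLinearMap.id ℝ (EuclideanSpace ℝ (Fin n)))‖ :=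
        ContinuousLinearMap.opNorm_comp_le _ _
    _ ≤ (‖e‖ ^ 2)⁻¹ * (2 * ‖x - y‖⁻¹ + 2 * ‖y - z‖⁻¹) := by
        apply mul_le_mul hGn hE'le (norm_nonneg _) (by positivity)
    _ = 2 * (‖e‖⁻¹) ^ 2 * (‖x - y‖⁻¹ + ‖y - z‖⁻¹) := by
        rw [inv_pow]; ring
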